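/- Let f : ℝ² → ℝ be a C² function whose gradient decays uniformly faster than 1/r. Suppose that for unit vectors X, Y the function p ↦ k(p,X) − k(p,Y) is continuous and not identically zero on ℝ². Then it changes sign on ℝ², i.e., it attains both positive and negative values. -/

import Mathlib

open Real
open MeasureTheory

/-- The normal curvature of the graph of `f` above `p` in the direction `X`. -/
noncomputable def normalCurv (f : ℝ × ℝ → ℝ) (p X : ℝ × ℝ) : ℝ :=
  fderiv ℝ (fun q => fderiv ℝ f q X) p X /
    ((1 + (fderiv ℝ f p X) ^ 2) *
      Real.sqrt (1 + ((fderiv ℝ f p (1, 0)) ^ 2 + (fderiv ℝ f p (0, 1)) ^ 2)))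

/- ### Auxiliary lemmas -/

lemma aux_arctan_nonneg {x : ℝ} (h : 0 ≤ x) : 0 ≤ Real.arctan x := by
  have := Real.arctan_strictMono.monotone h
  rwa [Real.arctan_zero] at this

lemma aux_abs_arctan_le_abs (x : ℝ) : |Real.arctan x| ≤ |x| := by
  rcases le_total 0 x with h | h
  · rw [abs_of_nonneg (aux_arctan_nonneg h), abs_of_nonneg h]
    have := Real.le_tan (aux_arctan_nonneg h) (Real.arctan_lt_pi_div_two x)
    rwa [Real.tan_arctan] at this
  · have h' : 0 ≤ -x := by linarith
    rw [abs_of_nonpos (by simpa using aux_arctan_nonneg h'), abs_of_nonpos h]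
    have := Real.le_tan (aux_arctan_nonneg h') (Real.arctan_lt_pi_div_two (-x))
    rw [Real.tan_arctan, Real.arctan_neg] at this
    linarith

lemma aux_clm_eval (L : ℝ × ℝ →L[ℝ] ℝ) (Z : ℝ × ℝ) :
    L Z = Z.1 * L (1, 0) + Z.2 * L (0, 1) := by
  have hZ : Z = Z.1 • ((1 : ℝ), (0 : ℝ)) + Z.2 • ((0 : ℝ), (1 : ℝ)) := by
    simp [Prod.ext_iff]
  calc L Z = L (Z.1 • ((1 : ℝ), (0 : ℝ)) + Z.2 • ((0 : ℝ), (1 : ℝ))) := by rw [← hZ]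
    _ = Z.1 * L (1, 0) + Z.2 * L (0, 1) := by
        rw [map_add, L.map_smul, L.map_smul, smul_eq_mul, smul_eq_mul]

lemma aux_exists_polar (p : ℝ × ℝ) : ∃ θ : ℝ,
    p = (Real.sqrt (p.1 ^ 2 + p.2 ^ 2) * Real.cos θ,
         Real.sqrt (p.1 ^ 2 + p.2 ^ 2) * Real.sin θ) := by
  refine ⟨Complex.arg ⟨p.1, p.2⟩, ?_⟩
  have habs : ‖(⟨p.1, p.2⟩ : ℂ)‖ = Real.sqrt (p.1 ^ 2 + p.2 ^ 2) := by
    rw [Complex.norm_def, Complex.normSq_apply]; ring_nf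
  have h1 := Complex.norm_mul_cos_arg ⟨p.1, p.2⟩
  have h2 := Complex.norm_mul_sin_arg ⟨p.1, p.2⟩
  rw [habs] at h1 h2
  exact Prod.ext h1.symm h2.symm

lemma aux_cauchy2 {a b : ℝ} (c d : ℝ) (h : a ^ 2 + b ^ 2 = 1) :
    |a * c + b * d| ≤ Real.sqrt (c ^ 2 + d ^ 2) := by
  have h1 : (a * c + b * d) ^ 2 ≤ c ^ 2 + d ^ 2 := by nlinarith [sq_nonneg (a * d - b * c)]
  calc |a * c + b * d| = Real.sqrt ((a * c + b * d) ^ 2) := (Real.sqrt_sq_eq_abs _).symm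
    _ ≤ Real.sqrt (c ^ 2 + d ^ 2) := Real.sqrt_le_sqrt h1

lemma aux_g_contDiff (f : ℝ × ℝ → ℝ) (hf : ContDiff ℝ 2 f) (Z : ℝ × ℝ) :
    ContDiff ℝ 1 (fun p => fderiv ℝ f p Z) :=
  ((ContinuousLinearMap.apply ℝ ℝ Z).contDiff).comp (hf.fderiv_right (by norm_num))

lemma aux_u_hasFDerivAt (f : ℝ × ℝ → ℝ) (hf : ContDiff ℝ 2 f) (Z : ℝ × ℝ) (p : ℝ × ℝ) :
    HasFDerivAt (fun q => Real.arctan (fderiv ℝ f q Z))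
      ((1 / (1 + (fderiv ℝ f p Z) ^ 2)) • fderiv ℝ (fun q => fderiv ℝ f q Z) p) p :=
  (Real.hasDerivAt_arctan (fderiv ℝ f p Z)).comp_hasFDerivAt (f := fun q => fderiv ℝ f q Z) p
    ((aux_g_contDiff f hf Z).differentiable one_ne_zero p).hasFDerivAt

lemma aux_dirderiv_le (f : ℝ × ℝ → ℝ) {Z : ℝ × ℝ} (hZ : Z.1 ^ 2 + Z.2 ^ 2 = 1) (p : ℝ × ℝ) :
    |fderiv ℝ f p Z| ≤ Real.sqrt ((fderiv ℝ f p (1, 0)) ^ 2 + (fderiv ℝ f p (0, 1)) ^ 2) := by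
  rw [aux_clm_eval (fderiv ℝ f p) Z]
  exact aux_cauchy2 _ _ hZ

lemma aux_curv_mul (f : ℝ × ℝ → ℝ) (p Z : ℝ × ℝ) :
    normalCurv f p Z *
        Real.sqrt (1 + ((fderiv ℝ f p (1, 0)) ^ 2 + (fderiv ℝ f p (0, 1)) ^ 2)) =
      fderiv ℝ (fun q => fderiv ℝ f q Z) p Z / (1 + (fderiv ℝ f p Z) ^ 2) := by
  have hs : (0 : ℝ) <
      Real.sqrt (1 + ((fderiv ℝ f p (1, 0)) ^ 2 + (fderiv ℝ f p (0, 1)) ^ 2)) :=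
    Real.sqrt_pos.2 (by positivity)
  have hz : (0 : ℝ) < 1 + (fderiv ℝ f p Z) ^ 2 := by positivity
  rw [normalCurv]
  field_simp

set_option maxHeartbeats 1000000 in
/-- The key lemma: if the curvature difference is everywhere nonnegative, it vanishes. -/
lemma aux_key (f : ℝ × ℝ → ℝ) (hf : ContDiff ℝ 2 f)
    (hdecay : ∀ ε > 0, ∃ R : ℝ, ∀ r ≥ R, ∀ θ : ℝ,
      r * Real.sqrt ((fderiv ℝ f (r * Real.cos θ, r * Real.sin θ) (1, 0)) ^ 2 +
        (fderiv ℝ f (r * Real.cos θ, r * Real.sin θ) (0, 1)) ^ 2) < ε)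
    (X Y : ℝ × ℝ) (hX : X.1 ^ 2 + X.2 ^ 2 = 1) (hY : Y.1 ^ 2 + Y.2 ^ 2 = 1)
    (hcont : Continuous fun p => normalCurv f p X - normalCurv f p Y)
    (hnonneg : ∀ p, 0 ≤ normalCurv f p X - normalCurv f p Y) :
    ∀ p : ℝ × ℝ, normalCurv f p X - normalCurv f p Y = 0 := by
  by_contra hne0
  push_neg at hne0
  obtain ⟨p₀, hp₀⟩ := hne0
  have hd0 : 0 < normalCurv f p₀ X - normalCurv f p₀ Y :=
    lt_of_le_of_ne (hnonneg p₀) (Ne.symm hp₀)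
  -- Notation
  set N : ℝ × ℝ → ℝ :=
    fun p => Real.sqrt ((fderiv ℝ f p (1, 0)) ^ 2 + (fderiv ℝ f p (0, 1)) ^ 2) with hN
  set w : ℝ × ℝ → ℝ :=
    fun p => Real.sqrt (1 + ((fderiv ℝ f p (1, 0)) ^ 2 + (fderiv ℝ f p (0, 1)) ^ 2)) with hwdef
  have hw1 : ∀ p, 1 ≤ w p := fun p => by
    have h1 : (1:ℝ) ≤ 1 + ((fderiv ℝ f p (1, 0)) ^ 2 + (fderiv ℝ f p (0, 1)) ^ 2) := by
      nlinarith [sq_nonneg (fderiv ℝ f p (1, 0)), sq_nonneg (fderiv ℝ f p (0, 1))]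
    have h2 := Real.sqrt_le_sqrt h1
    rw [Real.sqrt_one] at h2
    exact h2
  have hgc : ∀ Z : ℝ × ℝ, Continuous (fun p => fderiv ℝ f p Z) :=
    fun Z => (aux_g_contDiff f hf Z).continuous
  have hwc : Continuous w := by
    apply Real.continuous_sqrt.comp
    exact continuous_const.add (((hgc (1,0)).pow 2).add ((hgc (0,1)).pow 2))
  set h : ℝ × ℝ → ℝ := fun p => (normalCurv f p X - normalCurv f p Y) * w p with hhdef
  have hhc : Continuous h := hcont.mul hwc
  have hh0 : ∀ p, 0 ≤ h p := fun p =>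
    mul_nonneg (hnonneg p) (le_trans zero_le_one (hw1 p))
  have hhp₀ : 0 < h p₀ := mul_pos hd0 (lt_of_lt_of_le one_pos (hw1 p₀))
  -- The vector field and its derivative
  set u : ℝ × ℝ → ℝ := fun p => Real.arctan (fderiv ℝ f p X) with hudef
  set v : ℝ × ℝ → ℝ := fun p => Real.arctan (fderiv ℝ f p Y) with hvdef
  set u' : ℝ × ℝ → (ℝ × ℝ →L[ℝ] ℝ) :=
    fun p => (1 / (1 + (fderiv ℝ f p X) ^ 2)) • fderiv ℝ (fun q => fderiv ℝ f q X) p with hu'def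
  set v' : ℝ × ℝ → (ℝ × ℝ →L[ℝ] ℝ) :=
    fun p => (1 / (1 + (fderiv ℝ f p Y) ^ 2)) • fderiv ℝ (fun q => fderiv ℝ f q Y) p with hv'def
  set F : ℝ × ℝ → ℝ := fun p => X.1 * u p - Y.1 * v p with hFdef
  set G : ℝ × ℝ → ℝ := fun p => X.2 * u p - Y.2 * v p with hGdef
  set F' : ℝ × ℝ → (ℝ × ℝ →L[ℝ] ℝ) := fun p => X.1 • u' p - Y.1 • v' p with hF'def
  set G' : ℝ × ℝ → (ℝ × ℝ →L[ℝ] ℝ) := fun p => X.2 • u' p - Y.2 • v' p with hG'def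
  have hFd : ∀ p, HasFDerivAt F (F' p) p := fun p =>
    ((aux_u_hasFDerivAt f hf X p).const_mul X.1).sub
      ((aux_u_hasFDerivAt f hf Y p).const_mul Y.1)
  have hGd : ∀ p, HasFDerivAt G (G' p) p := fun p =>
    ((aux_u_hasFDerivAt f hf X p).const_mul X.2).sub
      ((aux_u_hasFDerivAt f hf Y p).const_mul Y.2)
  have hFc : Continuous F :=
    (continuous_const.mul (Real.continuous_arctan.comp (hgc X))).sub
      (continuous_const.mul (Real.continuous_arctan.comp (hgc Y)))
  have hGc : Continuous G :=
    (continuous_const.mul (Real.continuous_arctan.comp (hgc X))).sub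
      (continuous_const.mul (Real.continuous_arctan.comp (hgc Y)))
  -- The divergence identity
  have hdiv : ∀ p, F' p (1, 0) + G' p (0, 1) = h p := by
    intro p
    have e1 : F' p (1, 0) + G' p (0, 1) = (u' p) X - (v' p) Y := by
      rw [aux_clm_eval (u' p) X, aux_clm_eval (v' p) Y]
      simp only [hF'def, hG'def, ContinuousLinearMap.sub_apply,
        ContinuousLinearMap.smul_apply, smul_eq_mul]
      ring
    have e2 : (u' p) X = normalCurv f p X * w p := by
      rw [hu'def]
      simp only [ContinuousLinearMap.smul_apply, smul_eq_mul]
      rw [hwdef, aux_curv_mul f p X]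
      ring
    have e3 : (v' p) Y = normalCurv f p Y * w p := by
      rw [hv'def]
      simp only [ContinuousLinearMap.smul_apply, smul_eq_mul]
      rw [hwdef, aux_curv_mul f p Y]
      ring
    rw [e1, e2, e3, hhdef]
    ring
  -- Pointwise bounds on F and G
  have habsX1 : |X.1| ≤ 1 := by
    rw [← Real.sqrt_sq_eq_abs]
    have h2 := Real.sqrt_le_sqrt (show X.1 ^ 2 ≤ 1 by nlinarith [sq_nonneg X.2])
    rwa [Real.sqrt_one] at h2
  have habsX2 : |X.2| ≤ 1 := by
    rw [← Real.sqrt_sq_eq_abs]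
    have h2 := Real.sqrt_le_sqrt (show X.2 ^ 2 ≤ 1 by nlinarith [sq_nonneg X.1])
    rwa [Real.sqrt_one] at h2
  have habsY1 : |Y.1| ≤ 1 := by
    rw [← Real.sqrt_sq_eq_abs]
    have h2 := Real.sqrt_le_sqrt (show Y.1 ^ 2 ≤ 1 by nlinarith [sq_nonneg Y.2])
    rwa [Real.sqrt_one] at h2
  have habsY2 : |Y.2| ≤ 1 := by
    rw [← Real.sqrt_sq_eq_abs]
    have h2 := Real.sqrt_le_sqrt (show Y.2 ^ 2 ≤ 1 by nlinarith [sq_nonneg Y.1])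
    rwa [Real.sqrt_one] at h2
  have hbound : ∀ p, |F p| ≤ 2 * N p ∧ |G p| ≤ 2 * N p := by
    intro p
    have hu : |u p| ≤ N p := by
      rw [hudef, hN]
      exact le_trans (aux_abs_arctan_le_abs _) (aux_dirderiv_le f hX p)
    have hv : |v p| ≤ N p := by
      rw [hvdef, hN]
      exact le_trans (aux_abs_arctan_le_abs _) (aux_dirderiv_le f hY p)
    have hN0 : 0 ≤ N p := Real.sqrt_nonneg _
    constructor
    · calc |F p| ≤ |X.1 * u p| + |Y.1 * v p| := abs_sub _ _
        _ = |X.1| * |u p| + |Y.1| * |v p| := by rw [abs_mul, abs_mul]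
        _ ≤ 1 * N p + 1 * N p :=
            add_le_add (mul_le_mul habsX1 hu (abs_nonneg _) zero_le_one)
              (mul_le_mul habsY1 hv (abs_nonneg _) zero_le_one)
        _ = 2 * N p := by ring
    · calc |G p| ≤ |X.2 * u p| + |Y.2 * v p| := abs_sub _ _
        _ = |X.2| * |u p| + |Y.2| * |v p| := by rw [abs_mul, abs_mul]
        _ ≤ 1 * N p + 1 * N p :=
            add_le_add (mul_le_mul habsX2 hu (abs_nonneg _) zero_le_one)
              (mul_le_mul habsY2 hv (abs_nonneg _) zero_le_one)
        _ = 2 * N p := by ring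
  -- Decay restated pointwise
  have hdecay' : ∀ ε > (0:ℝ), ∃ R : ℝ, ∀ p : ℝ × ℝ,
      R ≤ Real.sqrt (p.1 ^ 2 + p.2 ^ 2) → Real.sqrt (p.1 ^ 2 + p.2 ^ 2) * N p < ε := by
    intro ε hε
    obtain ⟨R, hR⟩ := hdecay ε hε
    refine ⟨R, fun p hp => ?_⟩
    obtain ⟨θ, hθ⟩ := aux_exists_polar p
    have h2 := hR (Real.sqrt (p.1 ^ 2 + p.2 ^ 2)) hp θ
    rw [← hθ] at h2
    exact h2
  -- Lower bound from continuity at p₀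
  obtain ⟨δ, hδ0, hδ⟩ := Metric.continuousAt_iff.1 (hhc.continuousAt (x := p₀)) (h p₀ / 2) (by linarith)
  set δ' : ℝ := δ / 2 with hδ'def
  have hδ'0 : 0 < δ' := by rw [hδ'def]; linarith
  set Q : Set (ℝ × ℝ) := Set.Icc (p₀.1 - δ', p₀.2 - δ') (p₀.1 + δ', p₀.2 + δ') with hQdef
  have hQsub : ∀ q ∈ Q, h p₀ / 2 ≤ h q := by
    intro q hq
    rw [hQdef, Set.mem_Icc, Prod.le_def, Prod.le_def] at hq
    dsimp only at hq
    have hdist : dist q p₀ < δ := by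
      rw [Prod.dist_eq]
      have h1 : dist q.1 p₀.1 ≤ δ' := by
        rw [Real.dist_eq, abs_le]
        constructor <;> [linarith [hq.1.1]; linarith [hq.2.1]]
      have h2 : dist q.2 p₀.2 ≤ δ' := by
        rw [Real.dist_eq, abs_le]
        constructor <;> [linarith [hq.1.2]; linarith [hq.2.2]]
      calc max (dist q.1 p₀.1) (dist q.2 p₀.2) ≤ δ' := max_le h1 h2
        _ < δ := by rw [hδ'def]; linarith
    have := hδ hdist
    rw [Real.dist_eq, abs_lt] at this
    linarith [this.1]
  have hQvol : (volume Q).toReal = (2 * δ') * (2 * δ') := by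
    rw [hQdef, ← Set.Icc_prod_Icc, MeasureTheory.Measure.volume_eq_prod ℝ ℝ,
      MeasureTheory.Measure.prod_prod, Real.volume_Icc, Real.volume_Icc,
      ENNReal.toReal_mul, ENNReal.toReal_ofReal (by linarith), ENNReal.toReal_ofReal (by linarith)]
    ring_nf
  set c : ℝ := (h p₀ / 2) * ((2 * δ') * (2 * δ')) with hcdef
  have hc0 : 0 < c := by
    rw [hcdef]
    have : 0 < (2 * δ') * (2 * δ') := by positivity
    positivity
  have hQint : c ≤ ∫ q in Q, h q := by
    have := setIntegral_ge_of_const_le (μ := volume) (s := Q) (f := h)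
      measurableSet_Icc (IsCompact.measure_lt_top isCompact_Icc).ne hQsub
      (hhc.continuousOn.integrableOn_compact isCompact_Icc)
    rw [measureReal_def, hQvol] at this
    rw [hcdef]
    rw [smul_eq_mul, mul_comm] at this
    exact this
  -- The contradiction
  obtain ⟨R, hR⟩ := hdecay' (c / 32) (by linarith)
  set r : ℝ := max (max R 1) (max (|p₀.1| + δ') (|p₀.2| + δ')) with hrdef
  have hr1 : (1:ℝ) ≤ r := le_trans (le_max_right R 1) (le_max_left _ _)
  have hr0 : (0:ℝ) < r := lt_of_lt_of_le one_pos hr1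
  have hrR : R ≤ r := le_trans (le_max_left R 1) (le_max_left _ _)
  have hrp1 : |p₀.1| + δ' ≤ r := le_trans (le_max_left _ _) (le_max_right _ _)
  have hrp2 : |p₀.2| + δ' ≤ r := le_trans (le_max_right _ _) (le_max_right _ _)
  -- a ≤ b
  have hab : ((-r, -r) : ℝ × ℝ) ≤ (r, r) := ⟨by dsimp; linarith, by dsimp; linarith⟩
  set S : Set (ℝ × ℝ) := Set.Icc ((-r, -r) : ℝ × ℝ) (r, r) with hSdef
  have hSint : IntegrableOn h S volume :=
    hhc.continuousOn.integrableOn_compact isCompact_Icc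
  -- divergence theorem
  have hfun : (fun p => F' p (1, 0) + G' p (0, 1)) = h := funext hdiv
  have hdivthm := integral_divergence_prod_Icc_of_hasFDerivAt_off_countable_of_le
    F G F' G' ((-r, -r) : ℝ × ℝ) ((r, r) : ℝ × ℝ) hab ∅ Set.countable_empty
    (hFc.continuousOn) (hGc.continuousOn)
    (fun x _ => hFd x) (fun x _ => hGd x) (by rw [hfun]; exact hSint)
  rw [hfun] at hdivthm
  dsimp only at hdivthm
  -- boundary estimates
  have hNbound : ∀ p : ℝ × ℝ, r ≤ Real.sqrt (p.1 ^ 2 + p.2 ^ 2) → N p < c / 32 / r := by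
    intro p hp
    have h1 := hR p (le_trans hrR hp)
    have hN0 : 0 ≤ N p := Real.sqrt_nonneg _
    have h2 : r * N p ≤ Real.sqrt (p.1 ^ 2 + p.2 ^ 2) * N p := by
      apply mul_le_mul_of_nonneg_right hp hN0
    rw [lt_div_iff₀ hr0, mul_comm]
    exact lt_of_le_of_lt h2 h1
  have hsq : ∀ x : ℝ, r ≤ Real.sqrt (x ^ 2 + r ^ 2) := by
    intro x
    calc r = Real.sqrt (r ^ 2) := (Real.sqrt_sq hr0.le).symm
      _ ≤ Real.sqrt (x ^ 2 + r ^ 2) := Real.sqrt_le_sqrt (le_add_of_nonneg_left (sq_nonneg x))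
  have hsq' : ∀ x : ℝ, r ≤ Real.sqrt (r ^ 2 + x ^ 2) := by
    intro x
    calc r = Real.sqrt (r ^ 2) := (Real.sqrt_sq hr0.le).symm
      _ ≤ Real.sqrt (r ^ 2 + x ^ 2) := Real.sqrt_le_sqrt (le_add_of_nonneg_right (sq_nonneg x))
  have hsqb : ∀ x : ℝ, r ≤ Real.sqrt (x ^ 2 + (-r) ^ 2) := by
    intro x
    rw [neg_sq]
    exact hsq x
  have hsqb' : ∀ x : ℝ, r ≤ Real.sqrt ((-r) ^ 2 + x ^ 2) := by
    intro x
    rw [neg_sq]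
    exact hsq' x
  have hGtop : ‖∫ t in (-r)..r, G (t, r)‖ ≤ 2 * (c / 32 / r) * (2 * r) := by
    have hb : ∀ t ∈ Set.uIoc (-r) r, ‖G (t, r)‖ ≤ 2 * (c / 32 / r) := by
      intro t _
      have hb2 := (hbound (t, r)).2
      have hNb : N (t, r) < c / 32 / r := hNbound (t, r) (hsq t)
      have hN0 : 0 ≤ N (t, r) := Real.sqrt_nonneg _
      rw [Real.norm_eq_abs]
      calc |G (t, r)| ≤ 2 * N (t, r) := hb2
        _ ≤ 2 * (c / 32 / r) := by linarith
    have h0 := intervalIntegral.norm_integral_le_of_norm_le_const hb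
    rw [show r - (-r) = 2 * r by ring, abs_of_nonneg (by linarith : (0:ℝ) ≤ 2 * r)] at h0
    exact h0
  have hGbot : ‖∫ t in (-r)..r, G (t, -r)‖ ≤ 2 * (c / 32 / r) * (2 * r) := by
    have hb : ∀ t ∈ Set.uIoc (-r) r, ‖G (t, -r)‖ ≤ 2 * (c / 32 / r) := by
      intro t _
      have hb2 := (hbound (t, -r)).2
      have hNb : N (t, -r) < c / 32 / r := hNbound (t, -r) (hsqb t)
      have hN0 : 0 ≤ N (t, -r) := Real.sqrt_nonneg _
      rw [Real.norm_eq_abs]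
      calc |G (t, -r)| ≤ 2 * N (t, -r) := hb2
        _ ≤ 2 * (c / 32 / r) := by linarith
    have h0 := intervalIntegral.norm_integral_le_of_norm_le_const hb
    rw [show r - (-r) = 2 * r by ring, abs_of_nonneg (by linarith : (0:ℝ) ≤ 2 * r)] at h0
    exact h0
  have hFright : ‖∫ t in (-r)..r, F (r, t)‖ ≤ 2 * (c / 32 / r) * (2 * r) := by
    have hb : ∀ t ∈ Set.uIoc (-r) r, ‖F (r, t)‖ ≤ 2 * (c / 32 / r) := by
      intro t _
      have hb2 := (hbound (r, t)).1
      have hNb : N (r, t) < c / 32 / r := hNbound (r, t) (hsq' t)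
      have hN0 : 0 ≤ N (r, t) := Real.sqrt_nonneg _
      rw [Real.norm_eq_abs]
      calc |F (r, t)| ≤ 2 * N (r, t) := hb2
        _ ≤ 2 * (c / 32 / r) := by linarith
    have h0 := intervalIntegral.norm_integral_le_of_norm_le_const hb
    rw [show r - (-r) = 2 * r by ring, abs_of_nonneg (by linarith : (0:ℝ) ≤ 2 * r)] at h0
    exact h0
  have hFleft : ‖∫ t in (-r)..r, F (-r, t)‖ ≤ 2 * (c / 32 / r) * (2 * r) := by
    have hb : ∀ t ∈ Set.uIoc (-r) r, ‖F (-r, t)‖ ≤ 2 * (c / 32 / r) := by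
      intro t _
      have hb2 := (hbound (-r, t)).1
      have hNb : N (-r, t) < c / 32 / r := hNbound (-r, t) (hsqb' t)
      have hN0 : 0 ≤ N (-r, t) := Real.sqrt_nonneg _
      rw [Real.norm_eq_abs]
      calc |F (-r, t)| ≤ 2 * N (-r, t) := hb2
        _ ≤ 2 * (c / 32 / r) := by linarith
    have h0 := intervalIntegral.norm_integral_le_of_norm_le_const hb
    rw [show r - (-r) = 2 * r by ring, abs_of_nonneg (by linarith : (0:ℝ) ≤ 2 * r)] at h0
    exact h0
  have hcr : 2 * (c / 32 / r) * (2 * r) = c / 8 := by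
    field_simp
    ring
  rw [hcr] at hGtop hGbot hFright hFleft
  -- upper bound on the big integral
  have hup : ∫ q in S, h q ≤ c / 2 := by
    rw [Real.norm_eq_abs] at hGtop hGbot hFright hFleft
    have h1 := abs_le.1 hGtop
    have h2 := abs_le.1 hGbot
    have h3 := abs_le.1 hFright
    have h4 := abs_le.1 hFleft
    rw [hSdef, hdivthm]
    linarith [h1.1, h1.2, h2.1, h2.2, h3.1, h3.2, h4.1, h4.2]
  -- lower bound on the big integral
  have hQS : Q ⊆ S := by
    intro q hq
    rw [hQdef, Set.mem_Icc, Prod.le_def, Prod.le_def] at hq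
    dsimp only at hq
    rw [hSdef, Set.mem_Icc, Prod.le_def, Prod.le_def]
    dsimp only
    have e1 := abs_le.1 (le_refl |p₀.1|)
    have e2 := abs_le.1 (le_refl |p₀.2|)
    refine ⟨⟨?_, ?_⟩, ⟨?_, ?_⟩⟩ <;> (try dsimp) <;>
      [linarith [hq.1.1, e1.1]; linarith [hq.1.2, e2.1]; linarith [hq.2.1, e1.2];
       linarith [hq.2.2, e2.2]]
  have hlow : c ≤ ∫ q in S, h q := by
    refine le_trans hQint ?_
    apply setIntegral_mono_set hSint
    · exact Filter.Eventually.of_forall hh0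
    · exact Filter.Eventually.of_forall hQS
  linarith

/-- If the gradient of the `C²` function `f` decays uniformly faster
than `1/r`, and the function `p ↦ k(p,X) − k(p,Y)` is continuous and not identically
zero, then it attains both positive and negative values. -/
theorem curvature_difference_changes_sign
    (f : ℝ × ℝ → ℝ) (hf : ContDiff ℝ 2 f)
    (hdecay : ∀ ε > 0, ∃ R : ℝ, ∀ r ≥ R, ∀ θ : ℝ,
      r * Real.sqrt ((fderiv ℝ f (r * Real.cos θ, r * Real.sin θ) (1, 0)) ^ 2 +
        (fderiv ℝ f (r * Real.cos θ, r * Real.sin θ) (0, 1)) ^ 2) < ε)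
    (X Y : ℝ × ℝ) (hX : X.1 ^ 2 + X.2 ^ 2 = 1) (hY : Y.1 ^ 2 + Y.2 ^ 2 = 1)
    (hcont : Continuous fun p => normalCurv f p X - normalCurv f p Y)
    (hne : ¬ ∀ p : ℝ × ℝ, normalCurv f p X - normalCurv f p Y = 0) :
    (∃ p : ℝ × ℝ, 0 < normalCurv f p X - normalCurv f p Y) ∧
    (∃ q : ℝ × ℝ, normalCurv f q X - normalCurv f q Y < 0) := by
  have hcont' : Continuous fun p => normalCurv f p Y - normalCurv f p X := by
    have := hcont.neg
    simpa only [Pi.neg_def, neg_sub] using this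
  constructor
  · by_contra hpos
    push_neg at hpos
    have hnn : ∀ p, 0 ≤ normalCurv f p Y - normalCurv f p X := fun p => by
      have := hpos p
      linarith
    have := aux_key f hf hdecay Y X hY hX hcont' hnn
    exact hne fun p => by linarith [this p]
  · by_contra hneg
    push_neg at hneg
    have hnn : ∀ p, 0 ≤ normalCurv f p X - normalCurv f p Y := fun p => hneg p
    have := aux_key f hf hdecay X Y hX hY hcont hnn
    exact hne this
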